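/- Let X have a Gamma(α, 1) distribution with integer shape α ≥ 2. For every s ≥ 2, the s-iterated tail induced by X is T̄_s(x) = e^{−x} + (e^{−x}/C(α+s-2, α-1)) ∑_{ℓ=1}^{α-1} C(s+α-ℓ-2, α-ℓ-1) x^ℓ/ℓ!, for all x ≥ 0. -/

import Mathlib

open MeasureTheory Set Real

private lemma integrableOn_pow_exp (n : ℕ) :
    IntegrableOn (fun u : ℝ => u ^ n * Real.exp (-u)) (Ioi 0) := by
  have h := Real.GammaIntegral_convergent (by positivity : (0:ℝ) < n + 1)
  refine h.congr_fun (fun t ht => ?_) measurableSet_Ioi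
  rw [add_sub_cancel_right]
  beta_reduce
  rw [Real.rpow_natCast, mul_comm]

private lemma integral_pow_exp (n : ℕ) :
    ∫ u in Ioi (0:ℝ), u ^ n * Real.exp (-u) = (n.factorial : ℝ) := by
  have h := Real.Gamma_eq_integral (by positivity : (0:ℝ) < n + 1)
  have h2 : Real.Gamma ((n : ℝ) + 1) = (n.factorial : ℝ) := by
    exact_mod_cast Real.Gamma_nat_eq_factorial n
  rw [h2] at h
  rw [h]
  refine setIntegral_congr_fun measurableSet_Ioi fun t ht => ?_
  rw [add_sub_cancel_right, Real.rpow_natCast, mul_comm]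

private lemma shift_integral (m n : ℕ) (x : ℝ) :
    (∫ t in Ioi x, (t - x) ^ m * (t ^ n * Real.exp (-t)))
      = ∑ k ∈ Finset.range (n + 1),
          (n.choose k : ℝ) * x ^ (n - k) * Real.exp (-x) * ((m + k).factorial : ℝ) := by
  have hmp : MeasurePreserving (fun u : ℝ => u + x) volume volume :=
    measurePreserving_add_right volume x
  have hemb : MeasurableEmbedding (fun u : ℝ => u + x) :=
    (Homeomorph.addRight x).measurableEmbedding
  have himg : (fun u : ℝ => u + x) '' Ioi 0 = Ioi x := by
    rw [image_add_const_Ioi, zero_add]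
  have step1 : (∫ t in Ioi x, (t - x) ^ m * (t ^ n * Real.exp (-t)))
      = ∫ u in Ioi (0:ℝ), u ^ m * ((u + x) ^ n * Real.exp (-(u + x))) := by
    rw [← himg, hmp.setIntegral_image_emb hemb]
    simp [add_sub_cancel_right]
  rw [step1]
  have step2 : ∀ u ∈ Ioi (0:ℝ),
      u ^ m * ((u + x) ^ n * Real.exp (-(u + x)))
        = ∑ k ∈ Finset.range (n + 1),
            (n.choose k : ℝ) * x ^ (n - k) * Real.exp (-x) * (u ^ (m + k) * Real.exp (-u)) := by
    intro u _
    rw [add_pow]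
    rw [Finset.sum_mul, Finset.mul_sum]
    refine Finset.sum_congr rfl fun k _ => ?_
    rw [neg_add, Real.exp_add, pow_add]
    ring
  rw [setIntegral_congr_fun measurableSet_Ioi step2]
  rw [integral_finset_sum _ (fun k _ =>
    ((integrableOn_pow_exp (m + k)).const_mul ((n.choose k : ℝ) * x ^ (n - k) * Real.exp (-x))))]
  refine Finset.sum_congr rfl fun k _ => ?_
  rw [integral_const_mul, integral_pow_exp]

private lemma key_real (l p q : ℕ) :
    ((l + p).choose p : ℝ) * ((p + q + 1).factorial : ℝ) * (l.factorial : ℝ) *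
        (((l + p + q + 1).choose (l + p)) : ℝ)
      = ((p + q + 1).choose p : ℝ) * ((l + p + q + 1).factorial : ℝ) := by
  rw [Nat.cast_choose ℝ (show p ≤ l + p by omega),
    Nat.cast_choose ℝ (show l + p ≤ l + p + q + 1 by omega),
    Nat.cast_choose ℝ (show p ≤ p + q + 1 by omega),
    show l + p - p = l by omega, show l + p + q + 1 - (l + p) = q + 1 by omega,
    show p + q + 1 - p = q + 1 by omega]
  have h1 : (p.factorial : ℝ) ≠ 0 := by positivity
  have h2 : (l.factorial : ℝ) ≠ 0 := by positivity
  have h3 : ((q + 1).factorial : ℝ) ≠ 0 := by positivity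
  have h4 : ((l + p).factorial : ℝ) ≠ 0 := by positivity
  field_simp

/-- Explicit s-iterated tail induced by `Gamma(α, 1)` with integer shape `α ≥ 2`:
`T̄_s(x) = e^{-x} + (e^{-x}/C(α+s-2, α-1)) ∑_{ℓ=1}^{α-1} C(s+α-ℓ-2, α-ℓ-1) x^ℓ/ℓ!`. -/
theorem iterated_tail_gamma_explicit (a s : ℕ) (ha : 2 ≤ a) (hs : 2 ≤ s)
    (x : ℝ) (hx : 0 ≤ x) :
    (∫ t in Ioi x, (t - x) ^ (s - 1) * (t ^ (a - 1) * Real.exp (-t))) /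
        ((a + s - 2).factorial : ℝ)
      = Real.exp (-x)
        + Real.exp (-x) / ((a + s - 2).choose (a - 1) : ℝ) *
            ∑ l ∈ Finset.Icc 1 (a - 1),
              ((s + a - l - 2).choose (a - l - 1) : ℝ) * x ^ l / (l.factorial : ℝ) := by
  set n := a - 1 with hn
  set m := s - 1 with hm
  have hn1 : 1 ≤ n := by omega
  have hm1 : 1 ≤ m := by omega
  have has : a + s - 2 = n + m := by omega
  rw [has, shift_integral m n x]
  -- split off the k = n term
  rw [Finset.sum_range_succ]
  have hnm : (0:ℝ) < ((n + m).factorial : ℝ) := by positivity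
  have hC : (0:ℝ) < (((n + m).choose n : ℕ) : ℝ) := by
    exact_mod_cast Nat.choose_pos (by omega : n ≤ n + m)
  rw [add_div]
  have hlast : ((n.choose n : ℝ) * x ^ (n - n) * Real.exp (-x) * ((m + n).factorial : ℝ)) /
      ((n + m).factorial : ℝ) = Real.exp (-x) := by
    rw [Nat.choose_self, Nat.sub_self, show m + n = n + m by omega]
    field_simp
    simp
  rw [hlast, add_comm (_ / _) (Real.exp (-x))]
  congr 1
  -- now handle the sum over k ∈ range n, reindexed as l = n - k ∈ Icc 1 n
  rw [Finset.sum_div]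
  rw [Finset.mul_sum]
  refine Finset.sum_nbij' (fun k => n - k) (fun l => n - l) ?_ ?_ ?_ ?_ ?_
  · intro k hk
    simp only [Finset.mem_range] at hk
    simp only [Finset.mem_Icc]
    omega
  · intro l hl
    simp only [Finset.mem_Icc] at hl
    simp only [Finset.mem_range]
    omega
  · intro k hk
    simp only [Finset.mem_range] at hk
    show n - (n - k) = k
    omega
  · intro l hl
    simp only [Finset.mem_Icc] at hl
    show n - (n - l) = l
    omega
  · intro k hk
    simp only [Finset.mem_range] at hk
    -- goal: term_k / (n+m)! = e^{-x}/C(n+m,n) * (C(s+a-(n-k)-2, a-(n-k)-1) x^(n-k) / (n-k)!)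
    have e1 : s + a - (n - k) - 2 = m + k := by omega
    have e2 : a - (n - k) - 1 = k := by omega
    rw [e1, e2]
    -- key identity with l := n - k, p := k, q := m - 1
    have key := key_real (n - k) k (m - 1)
    rw [show n - k + k = n by omega, show k + (m - 1) + 1 = m + k by omega,
      show n + (m - 1) + 1 = n + m by omega] at key
    have hC' : (((n + m).choose n : ℕ) : ℝ) ≠ 0 := ne_of_gt hC
    have hnm' : ((n + m).factorial : ℝ) ≠ 0 := ne_of_gt hnm
    have hfk : ((n - k).factorial : ℝ) ≠ 0 := by positivity
    field_simp
    linear_combination (x ^ (n - k)) * key
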